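/- Let $a_1,\dots,a_n$ be nonzero vectors spanning $\mathbb{R}^d$ and let $\chi(M)=\sum_{I\in\Delta(M)}(-1)^{|I|}$ be the Euler characteristic of the matroid complex. Then $\chi(M)=0$ if and only if the configuration has a coloop, i.e., there exists an index $i$ and a nonzero linear functional $\ell$ on $\mathbb{R}^d$ vanishing on $a_j$ for all $j\neq i$ but not on $a_i$. -/

import Mathlib

open Finset Module Submodule

section Aux

variable {n d : ℕ} (a : Fin n → (Fin d → ℝ))

/-- insert criterion for finset-indexed families -/
theorem auxColoop_insert_iff (S : Finset (Fin n)) (e : Fin n) (he : e ∉ S) :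
    (LinearIndependent ℝ (fun i : (insert e S : Finset (Fin n)) => a i.1)) ↔
      (LinearIndependent ℝ (fun i : S => a i.1)) ∧ a e ∉ Submodule.span ℝ (a '' S) := by
  have h1 : ((insert e S : Finset (Fin n)) : Set (Fin n)) = insert e (S : Set (Fin n)) := by simp
  have h2 := linearIndepOn_insert (K := ℝ) (f := a) (s := (S : Set (Fin n))) (a := e)
    (by simpa using he)
  rw [← h1] at h2
  exact h2

theorem auxColoop_span_mono {S T : Finset (Fin n)} (h : S ⊆ T) :
    Submodule.span ℝ (a '' S) ≤ Submodule.span ℝ (a '' T) :=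
  Submodule.span_mono (Set.image_mono (by exact_mod_cast h))

theorem auxColoop_finrank_span_insert {x : Fin d → ℝ} {s : Set (Fin d → ℝ)}
    (hx : x ∉ Submodule.span ℝ s) :
    finrank ℝ (span ℝ (insert x s)) = finrank ℝ (span ℝ s) + 1 := by
  have hx0 : x ≠ 0 := fun h => hx (h ▸ (span ℝ s).zero_mem)
  have hinf : span ℝ {x} ⊓ span ℝ s = ⊥ := by
    rw [eq_bot_iff]
    rintro y ⟨hy1, hy2⟩
    obtain ⟨c, rfl⟩ := Submodule.mem_span_singleton.mp hy1
    rcases eq_or_ne c 0 with rfl | hc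
    · simp
    · exact absurd (by simpa [smul_smul, inv_mul_cancel₀ hc] using (span ℝ s).smul_mem c⁻¹ hy2) hx
  have h := Submodule.finrank_sup_add_finrank_inf_eq (span ℝ {x}) (span ℝ s)
  rw [hinf, finrank_bot, finrank_span_singleton hx0, add_zero] at h
  rw [Submodule.span_insert, h, add_comm]

open Classical in
/-- the Euler characteristic of the minor given by ground set E and contracted set C -/
noncomputable def auxChi (E C : Finset (Fin n)) : ℤ :=
  ∑ I ∈ E.powerset,
    (if LinearIndependent ℝ (fun i : (I ∪ C : Finset (Fin n)) => a i.1)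
      then (-1 : ℤ) ^ I.card else 0)

/-- the minor has a coloop -/
def auxHasColoop (E C : Finset (Fin n)) : Prop :=
  ∃ e ∈ E, a e ∉ Submodule.span ℝ (a '' ((E \ {e}) ∪ C : Finset (Fin n)))

noncomputable def auxRk (S : Finset (Fin n)) : ℕ :=
  finrank ℝ (Submodule.span ℝ (a '' S))

theorem auxChi_main (E : Finset (Fin n)) : ∀ C : Finset (Fin n), Disjoint E C →
    LinearIndependent ℝ (fun i : C => a i.1) →
    (auxHasColoop a E C → auxChi a E C = 0) ∧
    (¬ auxHasColoop a E C →
      0 < (-1 : ℤ) ^ (auxRk a (E ∪ C) - auxRk a C) * auxChi a E C) := by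
  classical
  induction E using Finset.strongInduction with
  | _ E ih =>
  intro C hdisj hC
  constructor
  · -- coloop ⇒ χ = 0
    rintro ⟨e, heE, hecol⟩
    have heE' : e ∉ E.erase e := Finset.notMem_erase e E
    have heC : e ∉ C := Finset.disjoint_left.mp hdisj heE
    have hEe : E \ {e} = E.erase e := (Finset.erase_eq E e).symm
    rw [hEe] at hecol
    have hrw : auxChi a E C = auxChi a (insert e (E.erase e)) C := by
      rw [Finset.insert_erase heE]
    rw [hrw, auxChi, Finset.sum_powerset_insert heE']
    have hterm : ∀ I ∈ (E.erase e).powerset,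
        (if LinearIndependent ℝ (fun i : ((insert e I ∪ C) : Finset (Fin n)) => a i.1)
          then (-1 : ℤ) ^ (insert e I).card else 0)
        = - (if LinearIndependent ℝ (fun i : ((I ∪ C) : Finset (Fin n)) => a i.1)
          then (-1 : ℤ) ^ I.card else 0) := by
      intro I hI
      rw [Finset.mem_powerset] at hI
      have heI : e ∉ I := fun h => heE' (hI h)
      have heIC : e ∉ I ∪ C := by simp [heI, heC]
      have hiff := auxColoop_insert_iff a (I ∪ C) e heIC
      have hcond : a e ∉ Submodule.span ℝ (a '' ((I ∪ C : Finset (Fin n)) : Set (Fin n))) :=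
        fun hmem => hecol (auxColoop_span_mono a
          (Finset.union_subset_union_left hI) hmem)
      rw [Finset.insert_union, Finset.card_insert_of_notMem heI]
      by_cases hLI : LinearIndependent ℝ (fun i : ((I ∪ C) : Finset (Fin n)) => a i.1)
      · rw [if_pos (hiff.mpr ⟨hLI, hcond⟩), if_pos hLI, pow_succ]; ring
      · rw [if_neg (fun h => hLI (hiff.mp h).1), if_neg hLI, neg_zero]
    rw [Finset.sum_congr rfl hterm]
    rw [Finset.sum_neg_distrib]
    show auxChi a (E.erase e) C + - auxChi a (E.erase e) C = 0
    ring
  · -- no coloop ⇒ sign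
    intro hnc
    rcases E.eq_empty_or_nonempty with rfl | ⟨e, heE⟩
    · have hCC : LinearIndependent ℝ (fun i : ((∅ ∪ C : Finset (Fin n))) => a i.1) := by
        rw [Finset.empty_union]; exact hC
      have h1 : auxChi a ∅ C = 1 := by
        rw [auxChi, Finset.powerset_empty, Finset.sum_singleton, if_pos hCC,
          Finset.card_empty, pow_zero]
      rw [Finset.empty_union, Nat.sub_self, pow_zero, one_mul, h1]
      norm_num
    · -- E nonempty
      have heE' : e ∉ E.erase e := Finset.notMem_erase e E
      have heC : e ∉ C := Finset.disjoint_left.mp hdisj heE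
      have hdisj' : Disjoint (E.erase e) C :=
        Finset.disjoint_of_subset_left (Finset.erase_subset e E) hdisj
      have hss : E.erase e ⊂ E := Finset.erase_ssubset heE
      have hins : ∀ e' ∈ E.erase e, insert e ((E.erase e) \ {e'}) = E \ {e'} := by
        intro e' he'
        have hne : e' ≠ e := (Finset.mem_erase.mp he').1
        ext x
        simp only [Finset.mem_insert, Finset.mem_sdiff, Finset.mem_singleton, Finset.mem_erase]
        constructor
        · rintro (rfl | ⟨⟨hxe, hxE⟩, hxne⟩)
          · exact ⟨heE, Ne.symm hne⟩
          · exact ⟨hxE, hxne⟩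
        · rintro ⟨hxE, hxne⟩
          by_cases hxe : x = e
          · exact Or.inl hxe
          · exact Or.inr ⟨⟨hxe, hxE⟩, hxne⟩
      have hEuC : E ∪ C = insert e (E.erase e ∪ C) := by
        rw [← Finset.insert_union]
        exact congrArg (· ∪ C) (Finset.insert_erase heE).symm
      have hkey : auxChi a E C = auxChi a (E.erase e) C +
          ∑ I ∈ (E.erase e).powerset,
            (if LinearIndependent ℝ (fun i : ((insert e I ∪ C) : Finset (Fin n)) => a i.1)
              then (-1 : ℤ) ^ (insert e I).card else 0) := by
        conv_lhs => rw [show E = insert e (E.erase e) from (Finset.insert_erase heE).symm]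
        rw [auxChi, Finset.sum_powerset_insert heE']
        rfl
      by_cases hloop : a e ∈ Submodule.span ℝ (a '' (C : Set (Fin n)))
      · -- e is a loop in the minor
        have hzero : ∀ I ∈ (E.erase e).powerset,
            (if LinearIndependent ℝ (fun i : ((insert e I ∪ C) : Finset (Fin n)) => a i.1)
              then (-1 : ℤ) ^ (insert e I).card else 0) = 0 := by
          intro I hI
          rw [Finset.mem_powerset] at hI
          have heI : e ∉ I := fun h => heE' (hI h)
          have heIC : e ∉ I ∪ C := by simp [heI, heC]
          rw [Finset.insert_union, if_neg]
          intro h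
          have h2 := (auxColoop_insert_iff a (I ∪ C) e heIC).mp h
          exact h2.2 (auxColoop_span_mono a Finset.subset_union_right hloop)
        rw [hkey, Finset.sum_congr rfl hzero, Finset.sum_const_zero, add_zero]
        have hnc' : ¬ auxHasColoop a (E.erase e) C := by
          rintro ⟨e', he', hcol'⟩
          refine hnc ⟨e', Finset.mem_of_mem_erase he', ?_⟩
          have h1 : (E \ {e'}) ∪ C = insert e (((E.erase e) \ {e'}) ∪ C) := by
            rw [← hins e' he', Finset.insert_union]
          rw [h1, Finset.coe_insert, Set.image_insert_eq, Submodule.span_insert_eq_span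
            (auxColoop_span_mono a Finset.subset_union_right hloop)]
          exact hcol'
        have hrk : auxRk a (E ∪ C) = auxRk a (E.erase e ∪ C) := by
          rw [auxRk, auxRk, hEuC, Finset.coe_insert, Set.image_insert_eq,
            Submodule.span_insert_eq_span (auxColoop_span_mono a Finset.subset_union_right hloop)]
        rw [hrk]
        exact (ih _ hss C hdisj' hC).2 hnc'
      · -- e is neither a loop nor a coloop
        have hCe : LinearIndependent ℝ (fun i : (insert e C : Finset (Fin n)) => a i.1) :=
          (auxColoop_insert_iff a C e heC).mpr ⟨hC, hloop⟩
        have hdisj2 : Disjoint (E.erase e) (insert e C) := by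
          rw [Finset.disjoint_insert_right]
          exact ⟨heE', hdisj'⟩
        have hecol : a e ∈ Submodule.span ℝ (a '' ((E.erase e ∪ C : Finset (Fin n)) : Set (Fin n))) := by
          by_contra h
          exact hnc ⟨e, heE, by rwa [Finset.erase_eq] at h⟩
        have hnc2 : ¬ auxHasColoop a (E.erase e) (insert e C) := by
          rintro ⟨e', he', hcol'⟩
          refine hnc ⟨e', Finset.mem_of_mem_erase he', ?_⟩
          have h1 : ((E.erase e) \ {e'}) ∪ insert e C = (E \ {e'}) ∪ C := by
            rw [Finset.union_insert, ← Finset.insert_union, hins e' he']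
          rwa [h1] at hcol'
        have hterm : ∀ I ∈ (E.erase e).powerset,
            (if LinearIndependent ℝ (fun i : ((insert e I ∪ C) : Finset (Fin n)) => a i.1)
              then (-1 : ℤ) ^ (insert e I).card else 0)
            = - (if LinearIndependent ℝ (fun i : ((I ∪ insert e C) : Finset (Fin n)) => a i.1)
              then (-1 : ℤ) ^ I.card else 0) := by
          intro I hI
          rw [Finset.mem_powerset] at hI
          have heI : e ∉ I := fun h => heE' (hI h)
          have h1 : insert e I ∪ C = I ∪ insert e C := by
            rw [Finset.insert_union, Finset.union_insert]
          rw [h1, Finset.card_insert_of_notMem heI, pow_succ]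
          split_ifs <;> ring
        have hchi : auxChi a E C = auxChi a (E.erase e) C - auxChi a (E.erase e) (insert e C) := by
          rw [hkey, Finset.sum_congr rfl hterm, Finset.sum_neg_distrib]
          show auxChi a (E.erase e) C + -auxChi a (E.erase e) (insert e C) = _
          ring
        have hrk1 : auxRk a (E.erase e ∪ C) = auxRk a (E ∪ C) := by
          rw [auxRk, auxRk, hEuC, Finset.coe_insert, Set.image_insert_eq,
            Submodule.span_insert_eq_span hecol]
        have hrk2 : auxRk a (insert e C) = auxRk a C + 1 := by
          rw [auxRk, auxRk, Finset.coe_insert, Set.image_insert_eq]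
          exact auxColoop_finrank_span_insert hloop
        have hrkE : E.erase e ∪ insert e C = E ∪ C := by
          rw [Finset.union_insert, ← hEuC]
        have hlt : auxRk a C < auxRk a (E ∪ C) := by
          apply Submodule.finrank_lt_finrank_of_lt
          refine lt_of_le_of_ne (auxColoop_span_mono a Finset.subset_union_right) (fun h => ?_)
          apply hloop
          rw [h]
          exact Submodule.subset_span (Set.mem_image_of_mem a (by simp [heE]))
        set r := auxRk a (E ∪ C) - auxRk a C with hr
        have hrpos : 1 ≤ r := by omega
        have ih1 := ih _ hss C hdisj' hC
        have ih2 := (ih _ hss (insert e C) hdisj2 hCe).2 hnc2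
        rw [hrkE, hrk2] at ih2
        have h2 : 0 < (-1 : ℤ) ^ (r - 1) * auxChi a (E.erase e) (insert e C) := by
          have he : auxRk a (E ∪ C) - (auxRk a C + 1) = r - 1 := by omega
          rwa [he] at ih2
        have h1 : 0 ≤ (-1 : ℤ) ^ r * auxChi a (E.erase e) C := by
          rcases Classical.em (auxHasColoop a (E.erase e) C) with hc | hc
          · rw [ih1.1 hc, mul_zero]
          · have hpos := ih1.2 hc
            rw [hrk1] at hpos
            exact le_of_lt hpos
        rw [hchi]
        have hsign : (-1 : ℤ) ^ r = -(-1 : ℤ) ^ (r - 1) := by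
          conv_lhs => rw [show r = (r - 1) + 1 from by omega]
          rw [pow_succ]; ring
        have heq : (-1 : ℤ) ^ r * (auxChi a (E.erase e) C - auxChi a (E.erase e) (insert e C))
            = (-1 : ℤ) ^ r * auxChi a (E.erase e) C
              + (-1 : ℤ) ^ (r - 1) * auxChi a (E.erase e) (insert e C) := by
          rw [hsign]; ring
        rw [heq]
        exact add_pos_of_nonneg_of_pos h1 h2



end Aux

open Classical in
/-- χ(M) = 0 iff the configuration has a coloop: an index i and a nonzero
linear functional vanishing on all a_j, j ≠ i, but not on a_i. -/
theorem stmt_2 (n d : ℕ) (a : Fin n → (Fin d → ℝ))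
    (hnz : ∀ i, a i ≠ 0)
    (hspan : Submodule.span ℝ (Set.range a) = ⊤) :
    (∑ I ∈ (Finset.univ : Finset (Fin n)).powerset,
        (if LinearIndependent ℝ (fun i : I => a i.1) then (-1 : ℤ) ^ I.card else 0)) = 0
      ↔ ∃ (i : Fin n) (ℓ : (Fin d → ℝ) →ₗ[ℝ] ℝ),
          ℓ ≠ 0 ∧ (∀ j, j ≠ i → ℓ (a j) = 0) ∧ ℓ (a i) ≠ 0 := by
  classical
  have hempty : LinearIndependent ℝ (fun i : ((∅ : Finset (Fin n))) => a i.1) :=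
    linearIndependent_empty_type
  have hdisj : Disjoint (Finset.univ : Finset (Fin n)) (∅ : Finset (Fin n)) :=
    Finset.disjoint_empty_right _
  have hmain := auxChi_main a Finset.univ ∅ hdisj hempty
  have hsum : (∑ I ∈ (Finset.univ : Finset (Fin n)).powerset,
      (if LinearIndependent ℝ (fun i : I => a i.1) then (-1 : ℤ) ^ I.card else 0))
      = auxChi a Finset.univ ∅ := by
    rw [auxChi]
    refine Finset.sum_congr rfl (fun I _ => ?_)
    rw [Finset.union_empty]
  have hcoloop : auxHasColoop a Finset.univ ∅ ↔
      ∃ (i : Fin n) (ℓ : (Fin d → ℝ) →ₗ[ℝ] ℝ),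
        ℓ ≠ 0 ∧ (∀ j, j ≠ i → ℓ (a j) = 0) ∧ ℓ (a i) ≠ 0 := by
    constructor
    · rintro ⟨e, -, hcol⟩
      obtain ⟨f, hfe, hmap⟩ := Submodule.exists_dual_map_eq_bot_of_notMem hcol inferInstance
      refine ⟨e, f, fun h => hfe (by simp [h]), fun j hj => ?_, hfe⟩
      have hjmem : a j ∈ Submodule.span ℝ
          (a '' ((Finset.univ \ {e} ∪ ∅ : Finset (Fin n)) : Set (Fin n))) :=
        Submodule.subset_span (Set.mem_image_of_mem a (by simp [hj]))
      have := Submodule.mem_map_of_mem (f := f) hjmem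
      rw [hmap, Submodule.mem_bot] at this
      exact this
    · rintro ⟨i, ℓ, hl0, hlj, hli⟩
      refine ⟨i, Finset.mem_univ i, fun hmem => hli ?_⟩
      have hle : Submodule.span ℝ
          (a '' ((Finset.univ \ {i} ∪ ∅ : Finset (Fin n)) : Set (Fin n))) ≤ LinearMap.ker ℓ := by
        rw [Submodule.span_le]
        rintro x ⟨j, hj, rfl⟩
        have hjne : j ≠ i := by
          simp only [Finset.coe_union, Finset.coe_sdiff, Finset.coe_univ, Finset.coe_singleton,
            Finset.coe_empty, Set.union_empty, Set.mem_diff, Set.mem_singleton_iff] at hj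
          exact hj.2
        exact LinearMap.mem_ker.mpr (hlj j hjne)
      exact LinearMap.mem_ker.mp (hle hmem)
  rw [hsum, hcoloop.symm]
  constructor
  · intro h0
    by_contra hnc
    have := hmain.2 hnc
    rw [h0, mul_zero] at this
    exact lt_irrefl 0 this
  · exact hmain.1
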